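/- Let (X, ≤) be a partially ordered set and let F be a nonempty commutative family of monotone maps from X to itself. Then for every x ∈ X with x ≤ f x for all f ∈ F, the orbit set {φ x : φ ∈ iter F} is directed with respect to ≤: any two of its elements have a common upper bound in the set. -/

import Mathlib

/-- The composition closure of a family `F` of self-maps: all finite compositions
`f₁ ∘ ⋯ ∘ fₙ` with `n ≥ 1` and each `fᵢ ∈ F`. -/
inductive IterClosure {X : Type*} (F : Set (X → X)) : (X → X) → Prop
  | base {f : X → X} : f ∈ F → IterClosure F f
  | comp {f φ : X → X} : f ∈ F → IterClosure F φ → IterClosure F (f ∘ φ)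

lemma IterClosure.mono {X : Type*} [PartialOrder X] {F : Set (X → X)}
    (hmono : ∀ f ∈ F, Monotone f) {φ : X → X} (h : IterClosure F φ) : Monotone φ := by
  induction h with
  | base hf => exact hmono _ hf
  | comp hf _ ih => exact (hmono _ hf).comp ih

lemma IterClosure.comm_mem {X : Type*} {F : Set (X → X)}
    (hcomm : ∀ f ∈ F, ∀ g ∈ F, f ∘ g = g ∘ f) {f φ : X → X}
    (hf : f ∈ F) (h : IterClosure F φ) : f ∘ φ = φ ∘ f := by
  induction h with
  | base hg => exact hcomm _ hf _ hg
  | @comp g ψ hg _ ih =>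
    calc f ∘ (g ∘ ψ) = g ∘ (f ∘ ψ) := by
          rw [← Function.comp_assoc, hcomm _ hf _ hg, Function.comp_assoc]
      _ = (g ∘ ψ) ∘ f := by rw [ih, Function.comp_assoc]

lemma IterClosure.comm {X : Type*} {F : Set (X → X)}
    (hcomm : ∀ f ∈ F, ∀ g ∈ F, f ∘ g = g ∘ f) {φ ψ : X → X}
    (hφ : IterClosure F φ) (hψ : IterClosure F ψ) : φ ∘ ψ = ψ ∘ φ := by
  induction hφ with
  | base hf => exact IterClosure.comm_mem hcomm hf hψ
  | @comp f χ hf _ ih =>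
    calc (f ∘ χ) ∘ ψ = f ∘ (ψ ∘ χ) := by rw [Function.comp_assoc, ih]
      _ = ψ ∘ (f ∘ χ) := by
          rw [← Function.comp_assoc, IterClosure.comm_mem hcomm hf hψ,
            Function.comp_assoc]

lemma IterClosure.infl {X : Type*} [PartialOrder X] {F : Set (X → X)}
    (hmono : ∀ f ∈ F, Monotone f) (hcomm : ∀ f ∈ F, ∀ g ∈ F, f ∘ g = g ∘ f)
    {x : X} (hx : ∀ f ∈ F, x ≤ f x) {φ : X → X} (h : IterClosure F φ) : x ≤ φ x := by
  induction h with
  | base hf => exact hx _ hf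
  | @comp f ψ hf hψ ih =>
    have : (f ∘ ψ) x = ψ (f x) := by
      rw [IterClosure.comm_mem hcomm hf hψ]; rfl
    rw [this]
    exact ih.trans ((IterClosure.mono hmono hψ) (hx _ hf))

lemma IterClosure.compClosure {X : Type*} {F : Set (X → X)} {φ ψ : X → X}
    (hφ : IterClosure F φ) (hψ : IterClosure F ψ) : IterClosure F (φ ∘ ψ) := by
  induction hφ with
  | base hf => exact .comp hf hψ
  | @comp f χ hf _ ih =>
    rw [Function.comp_assoc]
    exact .comp hf ih

/-- For a poset `X` and a nonempty commutative family `F` of monotone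
self-maps, the orbit `{φ x : φ ∈ iter F}` of any point `x` of the extensivity domain
is directed. -/
theorem stmt_7 {X : Type*} [PartialOrder X]
    (F : Set (X → X)) (hF : F.Nonempty)
    (hmono : ∀ f ∈ F, Monotone f)
    (hcomm : ∀ f ∈ F, ∀ g ∈ F, f ∘ g = g ∘ f) :
    ∀ x : X, (∀ f ∈ F, x ≤ f x) →
      DirectedOn (· ≤ ·) {y : X | ∃ φ : X → X, IterClosure F φ ∧ y = φ x} := by
  intro x hx
  rintro a ⟨φ, hφ, rfl⟩ b ⟨ψ, hψ, rfl⟩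
  refine ⟨(φ ∘ ψ) x, ⟨φ ∘ ψ, hφ.compClosure hψ, rfl⟩, ?_, ?_⟩
  · exact (hφ.mono hmono) (hψ.infl hmono hcomm hx)
  · have : (φ ∘ ψ) x = ψ (φ x) := by rw [IterClosure.comm hcomm hφ hψ]; rfl
    rw [this]
    exact (hψ.mono hmono) (hφ.infl hmono hcomm hx)
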